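/- Let d ≥ 1 and let F : ℝ^d → ℝ be Lipschitz continuous and differentiable at a point x ∈ ℝ^d. For σ > 0 let μ_σ be the centered isotropic Gaussian probability measure on ℝ^d with covariance σ²·I, and let (a(σ), b(σ)) ∈ ℝ × ℝ^d be the unique minimizer over affine functions of the expected squared loss ∫ (F(x+z) − a − ⟨b, z⟩)² dμ_σ(z). Then as σ → 0⁺, the slope vector b(σ) converges to the gradient ∇F(x) and the intercept a(σ) converges to F(x). -/

import Mathlib

open MeasureTheory ProbabilityTheory Filter Topology

/-- The expected squared loss of the affine surrogate `z ↦ a + ⟨b, z⟩` against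
the black box `F` around `x`, under the centered isotropic Gaussian on `ℝ^d`
with covariance `σ²·I`. -/
noncomputable def gaussAffineLoss (d : ℕ) (F : (Fin d → ℝ) → ℝ)
    (x : Fin d → ℝ) (σ : ℝ) (a : ℝ) (b : Fin d → ℝ) : ℝ :=
  ∫ z, (F (x + z) - (a + ∑ i, b i * z i)) ^ 2
    ∂(Measure.pi fun _ : Fin d => gaussianReal 0 (Real.toNNReal (σ ^ 2)))

open Real
open scoped NNReal ENNReal


lemma gauss_pdf_eq (x : ℝ) :
    gaussianPDFReal 0 1 x = (Real.sqrt (2 * π))⁻¹ * Real.exp (-(2⁻¹) * x ^ 2) := by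
  simp only [gaussianPDFReal, NNReal.coe_one, mul_one, sub_zero]
  ring_nf

lemma integral_gaussReal (f : ℝ → ℝ) :
    ∫ x, f x ∂(gaussianReal 0 1) = ∫ x, gaussianPDFReal 0 1 x * f x := by
  rw [gaussianReal_of_var_ne_zero 0 one_ne_zero, gaussianPDF_def]
  rw [show (fun x => ENNReal.ofReal (gaussianPDFReal 0 1 x))
      = fun x => ((Real.toNNReal (gaussianPDFReal 0 1 x) : ℝ≥0) : ℝ≥0∞) from rfl]
  rw [integral_withDensity_eq_integral_smul
    (measurable_gaussianPDFReal 0 1).real_toNNReal f]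
  congr 1; funext y
  simp [NNReal.smul_def, Real.coe_toNNReal _ (gaussianPDFReal_nonneg 0 1 y)]

lemma integrable_gaussReal_iff (f : ℝ → ℝ) :
    Integrable f (gaussianReal 0 1) ↔
      Integrable (fun x => f x * gaussianPDFReal 0 1 x) volume := by
  rw [gaussianReal_of_var_ne_zero 0 one_ne_zero, gaussianPDF_def]
  rw [integrable_withDensity_iff (measurable_gaussianPDFReal 0 1).ennreal_ofReal
    (Eventually.of_forall fun x => ENNReal.ofReal_lt_top)]
  refine integrable_congr (Eventually.of_forall fun y => ?_)
  simp [ENNReal.toReal_ofReal (gaussianPDFReal_nonneg 0 1 y)]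

-- assume s1 lemmas
lemma integrable_id_gaussReal : Integrable (fun x : ℝ => x) (gaussianReal 0 1) := by
  rw [integrable_gaussReal_iff]
  have h : Integrable (fun x : ℝ => (Real.sqrt (2 * π))⁻¹ *
      (x * Real.exp (-(2⁻¹) * x ^ 2))) volume :=
    (integrable_mul_exp_neg_mul_sq (by norm_num : (0:ℝ) < 2⁻¹)).const_mul _
  refine h.congr (Eventually.of_forall fun y => ?_)
  simp only [gauss_pdf_eq]; ring

lemma integrable_sq_gaussReal : Integrable (fun x : ℝ => x ^ 2) (gaussianReal 0 1) := by
  rw [integrable_gaussReal_iff]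
  have h0 : Integrable (fun x : ℝ => x ^ (2:ℝ) * Real.exp (-(2⁻¹) * x ^ 2)) volume :=
    integrable_rpow_mul_exp_neg_mul_sq (by norm_num : (0:ℝ) < 2⁻¹) (by norm_num)
  have h : Integrable (fun x : ℝ => (Real.sqrt (2 * π))⁻¹ *
      (x ^ (2:ℝ) * Real.exp (-(2⁻¹) * x ^ 2))) volume := h0.const_mul _
  refine h.congr (Eventually.of_forall fun y => ?_)
  have hy : y ^ (2:ℝ) = y ^ (2:ℕ) := by rw [← Real.rpow_natCast y 2]; norm_num
  simp only [gauss_pdf_eq, hy]; ring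

lemma exp_term_tendsto_atTop : Tendsto (fun x : ℝ => Real.exp (-(2⁻¹) * x ^ 2)) atTop (𝓝 0) := by
  apply Real.tendsto_exp_atBot.comp
  have h1 : Tendsto (fun x : ℝ => 2⁻¹ * x ^ 2) atTop atTop :=
    (tendsto_pow_atTop (two_ne_zero)).const_mul_atTop (by norm_num)
  have := tendsto_neg_atTop_atBot.comp h1
  refine this.congr fun x => by simp [Function.comp]

lemma exp_term_tendsto_atBot : Tendsto (fun x : ℝ => Real.exp (-(2⁻¹) * x ^ 2)) atBot (𝓝 0) := by
  have := exp_term_tendsto_atTop.comp tendsto_neg_atBot_atTop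
  refine this.congr fun x => by simp [Function.comp]

lemma mul_exp_tendsto_atTop : Tendsto (fun x : ℝ => x * Real.exp (-(2⁻¹) * x ^ 2)) atTop (𝓝 0) := by
  have h := rpow_mul_exp_neg_mul_sq_isLittleO_exp_neg (show (0:ℝ) < 2⁻¹ by norm_num) 1
  have hexp : Tendsto (fun x : ℝ => Real.exp (-(1/2) * x)) atTop (𝓝 0) := by
    apply Real.tendsto_exp_atBot.comp
    have h1 : Tendsto (fun x : ℝ => (1/2 : ℝ) * x) atTop atTop :=
      tendsto_id.const_mul_atTop (by norm_num)
    have h2 := tendsto_neg_atTop_atBot.comp h1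
    refine h2.congr fun x => ?_
    simp [Function.comp]
  have h2 := h.isBigO.trans_tendsto hexp
  refine h2.congr' (by filter_upwards [eventually_gt_atTop (0:ℝ)] with x hx; rw [Real.rpow_one])

lemma mul_exp_tendsto_atBot : Tendsto (fun x : ℝ => x * Real.exp (-(2⁻¹) * x ^ 2)) atBot (𝓝 0) := by
  have := (mul_exp_tendsto_atTop.comp tendsto_neg_atBot_atTop).neg
  rw [neg_zero] at this
  refine this.congr fun x => ?_
  simp only [Function.comp_apply, neg_sq]
  ring

lemma integral_exp_half : ∫ x : ℝ, Real.exp (-(2⁻¹) * x ^ 2) = Real.sqrt (2 * π) := by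
  rw [integral_gaussian, show π / 2⁻¹ = 2 * π by ring]

lemma integral_id_gaussReal : ∫ x, x ∂(gaussianReal 0 1) = 0 := by
  rw [integral_gaussReal]
  have hderiv : ∀ x : ℝ, HasDerivAt (fun y : ℝ => -Real.exp (-(2⁻¹) * y ^ 2))
      (x * Real.exp (-(2⁻¹) * x ^ 2)) x := by
    intro x
    have h1 : HasDerivAt (fun y : ℝ => -(2⁻¹) * y ^ 2) (-(2⁻¹) * (2 * x)) x :=
      ((hasDerivAt_pow 2 x).const_mul _).congr_deriv (by ring)
    have := (h1.exp).neg
    refine this.congr_deriv ?_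
    ring
  have hint : Integrable (fun x : ℝ => x * Real.exp (-(2⁻¹) * x ^ 2)) :=
    integrable_mul_exp_neg_mul_sq (by norm_num)
  have := integral_of_hasDerivAt_of_tendsto hderiv hint
    (exp_term_tendsto_atBot.neg) (exp_term_tendsto_atTop.neg)
  simp only [neg_zero, sub_zero] at this
  have h2 : ∫ x : ℝ, gaussianPDFReal 0 1 x * x
      = (Real.sqrt (2 * π))⁻¹ * ∫ x : ℝ, x * Real.exp (-(2⁻¹) * x ^ 2) := by
    rw [← integral_const_mul]
    congr 1; funext y; rw [gauss_pdf_eq]; ring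
  rw [h2, this, mul_zero]

lemma integral_sq_gaussReal : ∫ x, x ^ 2 ∂(gaussianReal 0 1) = 1 := by
  rw [integral_gaussReal]
  have hderiv : ∀ x : ℝ, HasDerivAt (fun y : ℝ => -y * Real.exp (-(2⁻¹) * y ^ 2))
      (x ^ 2 * Real.exp (-(2⁻¹) * x ^ 2) - Real.exp (-(2⁻¹) * x ^ 2)) x := by
    intro x
    have h1 : HasDerivAt (fun y : ℝ => -(2⁻¹) * y ^ 2) (-(2⁻¹) * (2 * x)) x :=
      ((hasDerivAt_pow 2 x).const_mul _).congr_deriv (by ring)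
    have h2 : HasDerivAt (fun y : ℝ => Real.exp (-(2⁻¹) * y ^ 2))
        (Real.exp (-(2⁻¹) * x ^ 2) * (-(2⁻¹) * (2 * x))) x := h1.exp
    have h3 : HasDerivAt (fun y : ℝ => -y) (-1 : ℝ) x := (hasDerivAt_id x).neg
    have := h3.mul h2
    refine this.congr_deriv ?_
    ring
  have hint2 : Integrable (fun x : ℝ => x ^ 2 * Real.exp (-(2⁻¹) * x ^ 2)) := by
    have h0 := integrable_rpow_mul_exp_neg_mul_sq (by norm_num : (0:ℝ) < 2⁻¹)
      (by norm_num : (-1:ℝ) < 2)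
    refine h0.congr (Eventually.of_forall fun y => ?_)
    have hy : y ^ (2:ℝ) = y ^ (2:ℕ) := by rw [← Real.rpow_natCast y 2]; norm_num
    simp only [hy]
  have hint1 : Integrable (fun x : ℝ => Real.exp (-(2⁻¹) * x ^ 2)) :=
    integrable_exp_neg_mul_sq (by norm_num)
  have hint : Integrable (fun x : ℝ =>
      x ^ 2 * Real.exp (-(2⁻¹) * x ^ 2) - Real.exp (-(2⁻¹) * x ^ 2)) := hint2.sub hint1
  have hbot : Tendsto (fun y : ℝ => -y * Real.exp (-(2⁻¹) * y ^ 2)) atBot (𝓝 0) := by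
    have := mul_exp_tendsto_atBot.neg; rw [neg_zero] at this
    refine this.congr fun y => by ring
  have htop : Tendsto (fun y : ℝ => -y * Real.exp (-(2⁻¹) * y ^ 2)) atTop (𝓝 0) := by
    have := mul_exp_tendsto_atTop.neg; rw [neg_zero] at this
    refine this.congr fun y => by ring
  have key := integral_of_hasDerivAt_of_tendsto hderiv hint hbot htop
  rw [sub_zero, integral_sub hint2 hint1, integral_exp_half, sub_eq_zero] at key
  have h2 : ∫ x : ℝ, gaussianPDFReal 0 1 x * x ^ 2
      = (Real.sqrt (2 * π))⁻¹ * ∫ x : ℝ, x ^ 2 * Real.exp (-(2⁻¹) * x ^ 2) := by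
    rw [← integral_const_mul]
    congr 1; funext y; rw [gauss_pdf_eq]; ring
  rw [h2, key, inv_mul_cancel₀]
  positivity

namespace MeasureTheory
lemma MemLp.integrable_mul' {α : Type*} [MeasurableSpace α] {μ : Measure α} {f g : α → ℝ}
    (hf : MemLp f 2 μ) (hg : MemLp g 2 μ) : Integrable (fun x => f x * g x) μ := by
  rw [← memLp_one_iff_integrable]
  have h1 : (1 : ℝ≥0∞) / 1 = 1 / 2 + 1 / 2 := by
    rw [one_div_one]; exact (ENNReal.add_halves 1).symm
  have h := hg.smul (r := 1) hf
  convert h using 1; ext x; simp [mul_comm]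
end MeasureTheory

variable {d : ℕ}

lemma integrable_single_pi (f : ℝ → ℝ) (hf : Integrable f (gaussianReal 0 1)) (i : Fin d) :
    Integrable (fun w : Fin d → ℝ => f (w i))
      (Measure.pi fun _ : Fin d => gaussianReal 0 1) := by
  letI : MeasureSpace ℝ := ⟨gaussianReal 0 1⟩
  haveI : IsProbabilityMeasure (volume : Measure ℝ) :=
    inferInstanceAs (IsProbabilityMeasure (gaussianReal 0 1))
  have h : Integrable (fun w : Fin d → ℝ => ∏ k, (if k = i then f (w k) else 1)) volume := by
    refine Integrable.fintype_prod (f := fun k x => if k = i then f x else 1) (fun k => ?_)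
    by_cases hk : k = i
    · subst hk; simp only [eq_self_iff_true, if_true]; exact hf
    · simp only [hk, if_false]
      exact integrable_const 1
  have h2 : (volume : Measure (Fin d → ℝ)) = Measure.pi fun _ : Fin d => gaussianReal 0 1 := rfl
  rw [h2] at h
  refine h.congr (Eventually.of_forall fun w => ?_)
  simp [Finset.prod_ite_eq']

lemma integral_single_pi (f : ℝ → ℝ) (i : Fin d) :
    ∫ w : Fin d → ℝ, f (w i) ∂(Measure.pi fun _ : Fin d => gaussianReal 0 1)
      = ∫ x, f x ∂(gaussianReal 0 1) := by
  letI : MeasureSpace ℝ := ⟨gaussianReal 0 1⟩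
  haveI : IsProbabilityMeasure (volume : Measure ℝ) :=
    inferInstanceAs (IsProbabilityMeasure (gaussianReal 0 1))
  have hvol : (volume : Measure ℝ) = gaussianReal 0 1 := rfl
  have hvolpi : (volume : Measure (Fin d → ℝ)) = Measure.pi fun _ : Fin d => gaussianReal 0 1 :=
    rfl
  have h := integral_fintype_prod_eq_prod (𝕜 := ℝ) (ι := Fin d)
    (f := fun k x => if k = i then f x else 1) (μ := fun _ => (volume : Measure ℝ))
  simp only [hvol] at h
  have hL : (∫ w : Fin d → ℝ, ∏ k, (if k = i then f (w k) else 1)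
      ∂(Measure.pi fun _ : Fin d => gaussianReal 0 1))
      = ∫ w : Fin d → ℝ, f (w i) ∂(Measure.pi fun _ : Fin d => gaussianReal 0 1) := by
    congr 1; funext w; simp [Finset.prod_ite_eq']
  have hint : ∀ k : Fin d, (∫ x : ℝ, (if k = i then f x else 1) ∂(gaussianReal 0 1))
      = if k = i then ∫ x, f x ∂(gaussianReal 0 1) else 1 := by
    intro k; by_cases hk : k = i
    · simp only [hk, if_true, eq_self_iff_true]
    · simp [hk]
  rw [← hL, h]
  simp only [hint]
  simp [Finset.prod_ite_eq']

lemma integral_double_pi (f g : ℝ → ℝ) (i j : Fin d) (hij : i ≠ j) :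
    ∫ w : Fin d → ℝ, f (w i) * g (w j) ∂(Measure.pi fun _ : Fin d => gaussianReal 0 1)
      = (∫ x, f x ∂(gaussianReal 0 1)) * ∫ x, g x ∂(gaussianReal 0 1) := by
  letI : MeasureSpace ℝ := ⟨gaussianReal 0 1⟩
  haveI : IsProbabilityMeasure (volume : Measure ℝ) :=
    inferInstanceAs (IsProbabilityMeasure (gaussianReal 0 1))
  have hvol : (volume : Measure ℝ) = gaussianReal 0 1 := rfl
  have hvolpi : (volume : Measure (Fin d → ℝ)) = Measure.pi fun _ : Fin d => gaussianReal 0 1 :=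
    rfl
  have h := integral_fintype_prod_eq_prod (𝕜 := ℝ) (ι := Fin d)
    (f := fun k x => (if k = i then f x else 1) * (if k = j then g x else 1)) (μ := fun _ => (volume : Measure ℝ))
  simp only [hvol] at h
  have hL : (∫ w : Fin d → ℝ, ∏ k, ((if k = i then f (w k) else 1) * (if k = j then g (w k) else 1))
      ∂(Measure.pi fun _ : Fin d => gaussianReal 0 1))
      = ∫ w : Fin d → ℝ, f (w i) * g (w j)
        ∂(Measure.pi fun _ : Fin d => gaussianReal 0 1) := by
    congr 1; funext w
    rw [Finset.prod_mul_distrib]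
    simp [Finset.prod_ite_eq']
  have hint : ∀ k : Fin d, (∫ x : ℝ, ((if k = i then f x else 1) * (if k = j then g x else 1))
        ∂(gaussianReal 0 1))
      = (if k = i then ∫ x, f x ∂(gaussianReal 0 1) else 1)
        * (if k = j then ∫ x, g x ∂(gaussianReal 0 1) else 1) := by
    intro k
    by_cases hk : k = i
    · have hkj : k ≠ j := by rw [hk]; exact hij
      simp [hk, hkj, hij]
    · by_cases hkj : k = j
      · simp [hk, hkj, Ne.symm hij]
      · simp [hk, hkj]
  rw [← hL, h]
  simp only [hint]
  rw [Finset.prod_mul_distrib]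
  simp [Finset.prod_ite_eq']

lemma memℒp_coord (i : Fin d) :
    MemLp (fun w : Fin d → ℝ => w i) 2 (Measure.pi fun _ : Fin d => gaussianReal 0 1) := by
  rw [memLp_two_iff_integrable_sq (measurable_pi_apply i).aestronglyMeasurable]
  exact integrable_single_pi (fun x => x ^ 2) integrable_sq_gaussReal i

lemma integrable_coord (i : Fin d) :
    Integrable (fun w : Fin d → ℝ => w i) (Measure.pi fun _ : Fin d => gaussianReal 0 1) :=
  integrable_single_pi (fun x => x) integrable_id_gaussReal i

lemma integrable_coord_mul (i j : Fin d) :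
    Integrable (fun w : Fin d → ℝ => w i * w j)
      (Measure.pi fun _ : Fin d => gaussianReal 0 1) :=
  (memℒp_coord i).integrable_mul' (memℒp_coord j)

lemma integral_coord (i : Fin d) :
    ∫ w : Fin d → ℝ, w i ∂(Measure.pi fun _ : Fin d => gaussianReal 0 1) = 0 := by
  rw [integral_single_pi (fun x => x) i, integral_id_gaussReal]

lemma integral_coord_mul (i j : Fin d) :
    ∫ w : Fin d → ℝ, w i * w j ∂(Measure.pi fun _ : Fin d => gaussianReal 0 1)
      = if i = j then 1 else 0 := by
  by_cases hij : i = j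
  · subst hij
    rw [if_pos rfl]
    calc ∫ w : Fin d → ℝ, w i * w i ∂(Measure.pi fun _ : Fin d => gaussianReal 0 1)
        = ∫ w : Fin d → ℝ, (fun x : ℝ => x ^ 2) (w i)
          ∂(Measure.pi fun _ : Fin d => gaussianReal 0 1) := by
          congr 1; funext w; simp [sq]
      _ = 1 := by rw [integral_single_pi (fun x => x ^ 2) i, integral_sq_gaussReal]
  · rw [if_neg hij, integral_double_pi (fun x => x) (fun x => x) i j hij,
      integral_id_gaussReal, mul_zero]

variable {d : ℕ}

lemma memℒp_affine (a : ℝ) (c : Fin d → ℝ) :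
    MemLp (fun w : Fin d → ℝ => a + ∑ i, c i * w i) 2
      (Measure.pi fun _ : Fin d => gaussianReal 0 1) :=
  (memLp_const a).add (memLp_finset_sum Finset.univ
    fun i _ => (memℒp_coord i).const_mul (c i))

lemma integrable_affine (a : ℝ) (c : Fin d → ℝ) :
    Integrable (fun w : Fin d → ℝ => a + ∑ i, c i * w i)
      (Measure.pi fun _ : Fin d => gaussianReal 0 1) :=
  (integrable_const a).add (integrable_finset_sum Finset.univ
    fun i _ => (integrable_coord i).const_mul (c i))

lemma integral_affine (a : ℝ) (c : Fin d → ℝ) :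
    ∫ w : Fin d → ℝ, (a + ∑ i, c i * w i)
      ∂(Measure.pi fun _ : Fin d => gaussianReal 0 1) = a := by
  rw [integral_add (integrable_const a) (integrable_finset_sum Finset.univ
    fun i _ => (integrable_coord i).const_mul (c i)),
    integral_finset_sum Finset.univ (fun i _ => (integrable_coord i).const_mul (c i))]
  have : ∀ i : Fin d, ∫ w : Fin d → ℝ, c i * w i
      ∂(Measure.pi fun _ : Fin d => gaussianReal 0 1) = 0 := by
    intro i; rw [integral_const_mul, integral_coord, mul_zero]
  simp [this, measure_univ]

lemma loss_expansion (G : (Fin d → ℝ) → ℝ)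
    (hG : MemLp G 2 (Measure.pi fun _ : Fin d => gaussianReal 0 1))
    (M : ℝ) (hM : M = ∫ w : Fin d → ℝ, G w ∂(Measure.pi fun _ : Fin d => gaussianReal 0 1))
    (c : Fin d → ℝ)
    (hc : ∀ i, c i = ∫ w : Fin d → ℝ, G w * w i ∂(Measure.pi fun _ : Fin d => gaussianReal 0 1))
    (a : ℝ) (c' : Fin d → ℝ) :
    ∫ w : Fin d → ℝ, (G w - (a + ∑ i, c' i * w i)) ^ 2
        ∂(Measure.pi fun _ : Fin d => gaussianReal 0 1)
      = (∫ w : Fin d → ℝ, (G w - (M + ∑ i, c i * w i)) ^ 2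
          ∂(Measure.pi fun _ : Fin d => gaussianReal 0 1))
        + ((a - M) ^ 2 + ∑ i, (c' i - c i) ^ 2) := by
  set γ : Measure (Fin d → ℝ) := Measure.pi fun _ : Fin d => gaussianReal 0 1 with hγ
  set e : (Fin d → ℝ) → ℝ := fun w => G w - (M + ∑ i, c i * w i) with he
  set u : (Fin d → ℝ) → ℝ := fun w => (M - a) + ∑ i, (c i - c' i) * w i with hu
  have hGm : AEStronglyMeasurable G γ := hG.aestronglyMeasurable
  have hGint : Integrable G γ := hG.integrable one_le_two
  have hke : MemLp e 2 γ := hG.sub (memℒp_affine M c)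
  have hku : MemLp u 2 γ := memℒp_affine (M - a) (fun i => c i - c' i)
  have he_int : Integrable e γ := hke.integrable one_le_two
  have he2 : Integrable (fun w => e w ^ 2) γ := hke.integrable_sq
  have hu2 : Integrable (fun w => u w ^ 2) γ := hku.integrable_sq
  have heu : Integrable (fun w => e w * u w) γ := hke.integrable_mul' hku
  have hew : ∀ j, Integrable (fun w => e w * w j) γ :=
    fun j => hke.integrable_mul' (memℒp_coord j)
  -- ∫ e = 0
  have hinte : ∫ w, e w ∂γ = 0 := by
    rw [he]
    rw [integral_sub hGint (integrable_affine M c), integral_affine M c, ← hM, sub_self]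
  -- ∫ e * w j = 0
  have hintew : ∀ j, ∫ w, e w * w j ∂γ = 0 := by
    intro j
    have hptw : ∀ w : Fin d → ℝ, e w * w j
        = G w * w j - (M * w j + ∑ i, c i * (w i * w j)) := by
      intro w
      rw [he]
      simp only []
      rw [sub_mul, add_mul, Finset.sum_mul]
      congr 2
      refine Finset.sum_congr rfl fun i _ => by ring
    rw [integral_congr_ae (Eventually.of_forall hptw)]
    have h1 : Integrable (fun w : Fin d → ℝ => G w * w j) γ := hG.integrable_mul' (memℒp_coord j)
    have h2 : Integrable (fun w : Fin d → ℝ => M * w j) γ := (integrable_coord j).const_mul M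
    have h3 : Integrable (fun w : Fin d → ℝ => ∑ i, c i * (w i * w j)) γ :=
      integrable_finset_sum Finset.univ fun i _ => (integrable_coord_mul i j).const_mul (c i)
    have h23 : Integrable (fun w : Fin d → ℝ => M * w j + ∑ i, c i * (w i * w j)) γ :=
      h2.add h3
    rw [integral_sub h1 h23, integral_add h2 h3,
      integral_finset_sum Finset.univ
        (fun i _ => (integrable_coord_mul i j).const_mul (c i))]
    have h4 : ∫ w : Fin d → ℝ, M * w j ∂γ = 0 := by
      rw [integral_const_mul, integral_coord, mul_zero]
    have h5 : ∀ i, ∫ w : Fin d → ℝ, c i * (w i * w j) ∂γ = c i * (if i = j then 1 else 0) := by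
      intro i; rw [integral_const_mul, integral_coord_mul]
    simp only [← hγ, h5, h4]
    rw [← hc j]
    simp [Finset.sum_ite_eq]
  -- ∫ e * u = 0
  have hinteu : ∫ w, e w * u w ∂γ = 0 := by
    have hptw : ∀ w : Fin d → ℝ, e w * u w
        = (M - a) * e w + ∑ i, (c i - c' i) * (e w * w i) := by
      intro w
      rw [hu]
      simp only []
      rw [mul_add, Finset.mul_sum]
      congr 1
      · ring
      refine Finset.sum_congr rfl fun i _ => by ring
    rw [integral_congr_ae (Eventually.of_forall hptw)]
    have h1 : Integrable (fun w => (M - a) * e w) γ := he_int.const_mul _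
    have h2 : Integrable (fun w : Fin d → ℝ => ∑ i, (c i - c' i) * (e w * w i)) γ :=
      integrable_finset_sum Finset.univ fun i _ => ((hew i).const_mul _)
    rw [integral_add h1 h2, integral_const_mul, hinte, mul_zero,
      integral_finset_sum Finset.univ (fun i _ => ((hew i).const_mul _))]
    simp only [integral_const_mul, hintew, mul_zero]
    simp
  -- ∫ u^2
  have hintu2 : ∫ w, u w ^ 2 ∂γ = (M - a) ^ 2 + ∑ i, (c i - c' i) ^ 2 := by
    have hptw : ∀ w : Fin d → ℝ, u w ^ 2
        = (M - a) ^ 2 + ((∑ i, (2 * (M - a) * (c i - c' i)) * w i)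
          + ∑ i, ∑ j, ((c i - c' i) * (c j - c' j)) * (w i * w j)) := by
      intro w
      rw [hu]
      simp only []
      have hS1 : ∑ i, (2 * (M - a) * (c i - c' i)) * w i
          = (2 * (M - a)) * ∑ i, (c i - c' i) * w i := by
        rw [Finset.mul_sum]
        refine Finset.sum_congr rfl fun i _ => by ring
      have hS2 : (∑ i, (c i - c' i) * w i) ^ 2
          = ∑ i, ∑ j, ((c i - c' i) * (c j - c' j)) * (w i * w j) := by
        rw [sq, Finset.sum_mul_sum]
        refine Finset.sum_congr rfl fun i _ => ?_
        refine Finset.sum_congr rfl fun j _ => by ring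
      rw [hS1, ← hS2]
      ring
    rw [integral_congr_ae (Eventually.of_forall hptw)]
    have h1 : Integrable (fun _ : Fin d → ℝ => (M - a) ^ 2) γ := integrable_const _
    have h2 : Integrable (fun w : Fin d → ℝ =>
        ∑ i, (2 * (M - a) * (c i - c' i)) * w i) γ :=
      integrable_finset_sum Finset.univ fun i _ => (integrable_coord i).const_mul _
    have h3 : Integrable (fun w : Fin d → ℝ =>
        ∑ i, ∑ j, ((c i - c' i) * (c j - c' j)) * (w i * w j)) γ :=
      integrable_finset_sum Finset.univ fun i _ =>
        integrable_finset_sum Finset.univ fun j _ => (integrable_coord_mul i j).const_mul _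
    have h23 : Integrable (fun w : Fin d → ℝ =>
        (∑ i, (2 * (M - a) * (c i - c' i)) * w i)
          + ∑ i, ∑ j, ((c i - c' i) * (c j - c' j)) * (w i * w j)) γ := h2.add h3
    rw [integral_add h1 h23, integral_add h2 h3,
      integral_finset_sum Finset.univ (fun i _ => (integrable_coord i).const_mul _),
      integral_finset_sum Finset.univ (fun i _ =>
        integrable_finset_sum Finset.univ fun j _ => (integrable_coord_mul i j).const_mul _)]
    have h4 : ∀ i : Fin d, ∫ w : Fin d → ℝ, (2 * (M - a) * (c i - c' i)) * w i ∂γ = 0 := by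
      intro i; rw [integral_const_mul, integral_coord, mul_zero]
    have h5 : ∀ i : Fin d, (∫ w : Fin d → ℝ,
        ∑ j, ((c i - c' i) * (c j - c' j)) * (w i * w j) ∂γ) = (c i - c' i) ^ 2 := by
      intro i
      rw [integral_finset_sum Finset.univ
        (fun j _ => (integrable_coord_mul i j).const_mul _)]
      have h6 : ∀ j : Fin d, ∫ w : Fin d → ℝ,
          ((c i - c' i) * (c j - c' j)) * (w i * w j) ∂γ
          = ((c i - c' i) * (c j - c' j)) * (if i = j then 1 else 0) := by
        intro j; rw [integral_const_mul, integral_coord_mul]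
      simp only [← hγ, h6, mul_ite, mul_one, mul_zero]
      rw [Finset.sum_ite_eq Finset.univ i (fun j => (c i - c' i) * (c j - c' j))]
      simp [sq]
    simp only [← hγ, h4, h5]
    simp [integral_const, measure_univ]
  -- main
  have hsplit : ∀ w : Fin d → ℝ, G w - (a + ∑ i, c' i * w i) = e w + u w := by
    intro w
    rw [he, hu]
    simp only []
    have : ∑ i, (c i - c' i) * w i = (∑ i, c i * w i) - ∑ i, c' i * w i := by
      rw [← Finset.sum_sub_distrib]
      refine Finset.sum_congr rfl fun i _ => by ring
    rw [this]; ring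
  have hsq : ∀ w : Fin d → ℝ, (G w - (a + ∑ i, c' i * w i)) ^ 2
      = e w ^ 2 + (2 * (e w * u w) + u w ^ 2) := by
    intro w; rw [hsplit w]; ring
  rw [integral_congr_ae (Eventually.of_forall hsq)]
  have hA : Integrable (fun w => 2 * (e w * u w) + u w ^ 2) γ := (heu.const_mul 2).add hu2
  rw [integral_add he2 hA, integral_add (heu.const_mul 2) hu2,
    integral_const_mul, hinteu, mul_zero, zero_add, hintu2]
  have hre : ∫ w, (G w - (M + ∑ i, c i * w i)) ^ 2 ∂γ = ∫ w, e w ^ 2 ∂γ := rfl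
  rw [hre]
  have hsum : ∑ i, (c' i - c i) ^ 2 = ∑ i, (c i - c' i) ^ 2 :=
    Finset.sum_congr rfl fun i _ => by ring
  rw [hsum]
  ring

variable {d : ℕ}

lemma pi_gauss_map (σ : ℝ) :
    (Measure.pi fun _ : Fin d => gaussianReal 0 (Real.toNNReal (σ ^ 2)))
      = (Measure.pi fun _ : Fin d => gaussianReal 0 1).map (fun w i => σ * w i) := by
  have h1 : MeasurePreserving (fun y : ℝ => σ * y) (gaussianReal 0 1)
      (gaussianReal 0 (Real.toNNReal (σ ^ 2))) := by
    constructor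
    · exact measurable_id.const_mul σ
    · rw [gaussianReal_map_const_mul σ]
      congr 1
      · rw [mul_zero]
      · ext
        rw [mul_one]
        simp [Real.coe_toNNReal _ (sq_nonneg σ)]
  exact ((MeasureTheory.measurePreserving_pi _ _ (fun _ : Fin d => h1)).map_eq).symm

lemma norm_le_sum_abs (w : Fin d → ℝ) : ‖w‖ ≤ ∑ k, |w k| := by
  refine (pi_norm_le_iff_of_nonneg (by positivity)).2 fun i => ?_
  rw [Real.norm_eq_abs]
  exact Finset.single_le_sum (fun k _ => abs_nonneg (w k)) (Finset.mem_univ i)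

lemma memℒp_G {F : (Fin d → ℝ) → ℝ} {K : ℝ≥0} (hLip : LipschitzWith K F)
    (x : Fin d → ℝ) (σ : ℝ) :
    MemLp (fun w : Fin d → ℝ => F (x + σ • w)) 2
      (Measure.pi fun _ : Fin d => gaussianReal 0 1) := by
  have hFc : Continuous F := hLip.continuous
  have hmeas : AEStronglyMeasurable (fun w : Fin d → ℝ => F (x + σ • w))
      (Measure.pi fun _ : Fin d => gaussianReal 0 1) :=
    (hFc.comp (continuous_const.add (continuous_id.const_smul σ))).aestronglyMeasurable
  have hg : MemLp (fun w : Fin d → ℝ => |F x| + (K * |σ|) * ∑ k, |w k|) 2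
      (Measure.pi fun _ : Fin d => gaussianReal 0 1) := by
    refine (memLp_const (|F x|)).add (MemLp.const_mul (c := (K : ℝ) * |σ|) ?_)
    refine memLp_finset_sum Finset.univ fun k _ => ?_
    simpa [Real.norm_eq_abs] using (memℒp_coord k).norm
  refine hg.of_le hmeas (Eventually.of_forall fun w => ?_)
  have hdist : |F (x + σ • w) - F x| ≤ (K : ℝ) * (|σ| * ‖w‖) := by
    have h := hLip.dist_le_mul (x + σ • w) x
    rw [Real.dist_eq, dist_eq_norm, add_sub_cancel_left, norm_smul, Real.norm_eq_abs] at h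
    exact h
  have h2 : |F (x + σ • w)| ≤ |F x| + (K : ℝ) * (|σ| * ‖w‖) := by
    calc |F (x + σ • w)| = |F x + (F (x + σ • w) - F x)| := by ring_nf
      _ ≤ |F x| + |F (x + σ • w) - F x| := abs_add_le _ _
      _ ≤ |F x| + (K : ℝ) * (|σ| * ‖w‖) := by linarith
  have h3 : (K : ℝ) * (|σ| * ‖w‖) ≤ (K * |σ|) * ∑ k, |w k| := by
    rw [← mul_assoc]
    exact mul_le_mul_of_nonneg_left (norm_le_sum_abs w) (by positivity)
  rw [Real.norm_eq_abs, Real.norm_eq_abs]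
  rw [abs_of_nonneg (by positivity : (0:ℝ) ≤ |F x| + (K * |σ|) * ∑ k, |w k|)]
  linarith

lemma tendsto_M {F : (Fin d → ℝ) → ℝ} {K : ℝ≥0} (hLip : LipschitzWith K F)
    (x : Fin d → ℝ) :
    Tendsto (fun σ : ℝ => ∫ w : Fin d → ℝ, F (x + σ • w)
      ∂(Measure.pi fun _ : Fin d => gaussianReal 0 1)) (𝓝[>] 0) (𝓝 (F x)) := by
  set γ : Measure (Fin d → ℝ) := Measure.pi fun _ : Fin d => gaussianReal 0 1 with hγ
  have habs_int : ∀ k : Fin d, Integrable (fun w : Fin d → ℝ => |w k|) γ :=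
    fun k => (integrable_coord k).abs
  have hsum_int : Integrable (fun w : Fin d → ℝ => ∑ k, |w k|) γ :=
    integrable_finset_sum Finset.univ fun k _ => habs_int k
  set S : ℝ := ∫ w : Fin d → ℝ, (∑ k, |w k|) ∂γ with hS
  have key : ∀ σ : ℝ, ‖(∫ w, F (x + σ • w) ∂γ) - F x‖ ≤ ((K : ℝ) * S) * |σ| := by
    intro σ
    have hGint : Integrable (fun w : Fin d → ℝ => F (x + σ • w)) γ :=
      (memℒp_G hLip x σ).integrable one_le_two
    have hsub : (∫ w, F (x + σ • w) ∂γ) - F x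
        = ∫ w, (F (x + σ • w) - F x) ∂γ := by
      rw [integral_sub hGint (integrable_const (F x)), integral_const, probReal_univ]
      simp
    rw [hsub]
    have hbd : ∀ w : Fin d → ℝ, ‖F (x + σ • w) - F x‖ ≤ ((K : ℝ) * |σ|) * ∑ k, |w k| := by
      intro w
      rw [Real.norm_eq_abs]
      have h := hLip.dist_le_mul (x + σ • w) x
      rw [Real.dist_eq, dist_eq_norm, add_sub_cancel_left, norm_smul, Real.norm_eq_abs] at h
      calc |F (x + σ • w) - F x| ≤ (K : ℝ) * (|σ| * ‖w‖) := h
        _ ≤ ((K : ℝ) * |σ|) * ∑ k, |w k| := by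
          rw [← mul_assoc]
          exact mul_le_mul_of_nonneg_left (norm_le_sum_abs w) (by positivity)
    have := norm_integral_le_of_norm_le (hsum_int.const_mul ((K : ℝ) * |σ|))
      (Eventually.of_forall hbd)
    calc ‖∫ w, (F (x + σ • w) - F x) ∂γ‖
        ≤ ∫ w, ((K : ℝ) * |σ|) * ∑ k, |w k| ∂γ := this
      _ = ((K : ℝ) * S) * |σ| := by rw [integral_const_mul, ← hS]; ring
  have hg0 : Tendsto (fun σ : ℝ => ((K : ℝ) * S) * |σ|) (𝓝[>] 0) (𝓝 0) := by
    have : Tendsto (fun σ : ℝ => ((K : ℝ) * S) * |σ|) (𝓝 0) (𝓝 (((K : ℝ) * S) * |0|)) :=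
      (continuous_const.mul continuous_abs).tendsto 0
    simpa using this.mono_left nhdsWithin_le_nhds
  have h0 : Tendsto (fun σ : ℝ => (∫ w, F (x + σ • w) ∂γ) - F x) (𝓝[>] 0) (𝓝 0) :=
    squeeze_zero_norm key hg0
  have := h0.add_const (F x)
  simpa using this

lemma tendsto_B {F : (Fin d → ℝ) → ℝ} {K : ℝ≥0} (hLip : LipschitzWith K F)
    {x : Fin d → ℝ} (hdiff : DifferentiableAt ℝ F x) (i : Fin d) :
    Tendsto (fun σ : ℝ => (∫ w : Fin d → ℝ, F (x + σ • w) * w i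
        ∂(Measure.pi fun _ : Fin d => gaussianReal 0 1)) / σ) (𝓝[>] 0)
      (𝓝 (fderiv ℝ F x (Pi.single i 1))) := by
  set γ : Measure (Fin d → ℝ) := Measure.pi fun _ : Fin d => gaussianReal 0 1 with hγ
  have hFc : Continuous F := hLip.continuous
  set L : (Fin d → ℝ) →L[ℝ] ℝ := fderiv ℝ F x with hL
  -- step C : value of the limit integral
  have hmemsum : MemLp (fun w : Fin d → ℝ => (K : ℝ) * ∑ k, |w k|) 2 γ := by
    refine MemLp.const_mul ?_ _
    refine memLp_finset_sum Finset.univ fun k _ => ?_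
    simpa [Real.norm_eq_abs] using (memℒp_coord k).norm
  have hmemabsi : MemLp (fun w : Fin d → ℝ => |w i|) 2 γ := by
    simpa [Real.norm_eq_abs] using (memℒp_coord i).norm
  have hbound_int : Integrable (fun w : Fin d → ℝ => ((K : ℝ) * ∑ k, |w k|) * |w i|) γ :=
    hmemsum.integrable_mul' hmemabsi
  have hLrep : ∀ w : Fin d → ℝ, L w = ∑ j, w j * L (Pi.single j 1) := by
    intro w
    have hw : w = ∑ j, Pi.single j (w j) := (Finset.univ_sum_single w).symm
    calc L w = L (∑ j, Pi.single j (w j)) := by rw [← hw]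
      _ = ∑ j, L (Pi.single j (w j)) := by rw [map_sum]
      _ = ∑ j, w j * L (Pi.single j 1) := by
        refine Finset.sum_congr rfl fun j _ => ?_
        have : Pi.single j (w j) = w j • (Pi.single j (1:ℝ) : Fin d → ℝ) := by
          funext k
          by_cases hk : k = j
          · subst hk; simp
          · simp [Pi.single_eq_of_ne hk]
        rw [this, L.map_smul, smul_eq_mul]
  have hlim_int : ∫ w : Fin d → ℝ, L w * w i ∂γ = L (Pi.single i 1) := by
    have h1 : ∀ w : Fin d → ℝ, L w * w i = ∑ j, L (Pi.single j 1) * (w j * w i) := by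
      intro w
      rw [hLrep w, Finset.sum_mul]
      refine Finset.sum_congr rfl fun j _ => by ring
    rw [integral_congr_ae (Eventually.of_forall h1),
      integral_finset_sum Finset.univ
        (fun j _ => (integrable_coord_mul j i).const_mul _)]
    have h2 : ∀ j : Fin d, ∫ w : Fin d → ℝ, L (Pi.single j 1) * (w j * w i) ∂γ
        = L (Pi.single j 1) * (if j = i then 1 else 0) := by
      intro j; rw [integral_const_mul, integral_coord_mul]
    simp only [← hγ, h2, mul_ite, mul_one, mul_zero]
    simp [Finset.sum_ite_eq']
  -- step B : dominated convergence
  have hdct : Tendsto (fun σ : ℝ => ∫ w : Fin d → ℝ,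
      ((F (x + σ • w) - F x) / σ) * w i ∂γ) (𝓝[>] 0)
      (𝓝 (∫ w : Fin d → ℝ, L w * w i ∂γ)) := by
    refine tendsto_integral_filter_of_dominated_convergence
      (fun w => ((K : ℝ) * ∑ k, |w k|) * |w i|) ?_ ?_ hbound_int ?_
    · refine Eventually.of_forall fun σ => ?_
      exact (((hFc.comp (continuous_const.add (continuous_id.const_smul σ))).sub
        continuous_const).div_const σ).mul (continuous_apply i) |>.aestronglyMeasurable
    · filter_upwards [self_mem_nhdsWithin] with σ hσ
      refine Eventually.of_forall fun w => ?_
      have hσ0 : (0:ℝ) < σ := hσ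
      have h := hLip.dist_le_mul (x + σ • w) x
      rw [Real.dist_eq, dist_eq_norm, add_sub_cancel_left, norm_smul, Real.norm_eq_abs] at h
      rw [abs_of_pos hσ0] at h
      have hdiv : |F (x + σ • w) - F x| / σ ≤ (K : ℝ) * ‖w‖ := by
        rw [div_le_iff₀ hσ0]
        calc |F (x + σ • w) - F x| ≤ (K : ℝ) * (σ * ‖w‖) := h
          _ = (K : ℝ) * ‖w‖ * σ := by ring
      rw [Real.norm_eq_abs, abs_mul, abs_div, abs_of_pos hσ0]
      have h5 : (K : ℝ) * ‖w‖ ≤ (K : ℝ) * ∑ k, |w k| :=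
        mul_le_mul_of_nonneg_left (norm_le_sum_abs w) (by positivity)
      exact mul_le_mul (hdiv.trans h5) le_rfl (abs_nonneg _) (by positivity)
    · refine Eventually.of_forall fun w => ?_
      have h0 : HasDerivAt (fun σ : ℝ => F (x + σ • w)) (L w) 0 := by
        have h1 : HasDerivAt (fun σ : ℝ => x + σ • w) w 0 := by
          simpa using ((hasDerivAt_id (0:ℝ)).smul_const w).const_add x
        have h2 : HasFDerivAt F L (x + (0:ℝ) • w) := by
          simpa using hdiff.hasFDerivAt
        exact h2.comp_hasDerivAt 0 h1
      have h3 : Tendsto (slope (fun σ : ℝ => F (x + σ • w)) 0) (𝓝[≠] 0) (𝓝 (L w)) :=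
        hasDerivAt_iff_tendsto_slope.mp h0
      have h4 : Tendsto (slope (fun σ : ℝ => F (x + σ • w)) 0) (𝓝[>] 0) (𝓝 (L w)) :=
        h3.mono_left (nhdsWithin_mono 0 fun y hy => ne_of_gt hy)
      have h5 : Tendsto (fun σ : ℝ => (F (x + σ • w) - F x) / σ) (𝓝[>] 0) (𝓝 (L w)) := by
        refine h4.congr fun σ => ?_
        rw [slope_def_field]
        simp [div_eq_mul_inv]
      exact h5.mul_const (w i)
  rw [hlim_int] at hdct
  refine Tendsto.congr' ?_ hdct
  filter_upwards [self_mem_nhdsWithin] with σ hσ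
  have hσ0 : (0:ℝ) < σ := hσ
  have hGint : Integrable (fun w : Fin d → ℝ => F (x + σ • w) * w i) γ :=
    (memℒp_G hLip x σ).integrable_mul' (memℒp_coord i)
  have hconst : Integrable (fun w : Fin d → ℝ => F x * w i) γ :=
    (integrable_coord i).const_mul (F x)
  have h6 : ∀ w : Fin d → ℝ, ((F (x + σ • w) - F x) / σ) * w i
      = σ⁻¹ * (F (x + σ • w) * w i - F x * w i) := by
    intro w; field_simp
  rw [integral_congr_ae (Eventually.of_forall h6), integral_const_mul,
    integral_sub hGint hconst, integral_const_mul, integral_coord, mul_zero, sub_zero,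
    ← div_eq_inv_mul]

lemma loss_change_of_var {d : ℕ} (F : (Fin d → ℝ) → ℝ) (hFc : Continuous F)
    (x : Fin d → ℝ) (σ : ℝ) (a : ℝ) (b : Fin d → ℝ) :
    gaussAffineLoss d F x σ a b
      = ∫ w : Fin d → ℝ, (F (x + σ • w) - (a + ∑ i, (σ * b i) * w i)) ^ 2
          ∂(Measure.pi fun _ : Fin d => gaussianReal 0 1) := by
  rw [gaussAffineLoss, pi_gauss_map σ]
  have hT : Measurable (fun w : Fin d → ℝ => fun i => σ * w i) :=
    measurable_pi_lambda _ fun i => by fun_prop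
  have hf : AEStronglyMeasurable
      (fun z : Fin d → ℝ => (F (x + z) - (a + ∑ i, b i * z i)) ^ 2)
      ((Measure.pi fun _ : Fin d => gaussianReal 0 1).map (fun w i => σ * w i)) := by
    apply Continuous.aestronglyMeasurable
    exact ((hFc.comp (continuous_const.add continuous_id)).sub
      (continuous_const.add (continuous_finset_sum _ fun i _ =>
        continuous_const.mul (continuous_apply i)))).pow 2
  rw [integral_map hT.aemeasurable hf]
  refine integral_congr_ae (Eventually.of_forall fun w => ?_)
  have h1 : (x + fun i => σ * w i) = x + σ • w := by
    funext k; simp [Pi.smul_apply, smul_eq_mul]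
  have h2 : ∑ i, b i * (σ * w i) = ∑ i, (σ * b i) * w i :=
    Finset.sum_congr rfl fun i _ => by ring
  simp only []
  rw [h1, h2]

/-- s-LIME recovers the gradient: for a Lipschitz black box `F` differentiable
at `x`, if `(a(σ), b(σ))` is the unique minimizer over affine functions of the
expected squared loss under the centered Gaussian with covariance `σ²·I`, then
as `σ → 0⁺` the intercept `a(σ)` converges to `F(x)` and the slope vector
`b(σ)` converges to the gradient `∇F(x)`. -/
theorem slime_gaussian_coefficients_tendsto_gradient
    (d : ℕ) (hd : 1 ≤ d) (F : (Fin d → ℝ) → ℝ)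
    (hLip : ∃ K : NNReal, LipschitzWith K F)
    (x : Fin d → ℝ) (hdiff : DifferentiableAt ℝ F x)
    (a : ℝ → ℝ) (b : ℝ → Fin d → ℝ)
    (hmin : ∀ σ : ℝ, 0 < σ → ∀ (a' : ℝ) (b' : Fin d → ℝ),
        gaussAffineLoss d F x σ (a σ) (b σ) ≤ gaussAffineLoss d F x σ a' b')
    (huniq : ∀ σ : ℝ, 0 < σ → ∀ (a' : ℝ) (b' : Fin d → ℝ),
        (∀ (a'' : ℝ) (b'' : Fin d → ℝ),
          gaussAffineLoss d F x σ a' b' ≤ gaussAffineLoss d F x σ a'' b'')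
        → a' = a σ ∧ b' = b σ) :
    Tendsto a (𝓝[>] 0) (𝓝 (F x))
    ∧ Tendsto b (𝓝[>] 0) (𝓝 (fun i => fderiv ℝ F x (Pi.single i 1))) := by
  obtain ⟨K, hLip⟩ := hLip
  have hFc : Continuous F := hLip.continuous
  set γ : Measure (Fin d → ℝ) := Measure.pi fun _ : Fin d => gaussianReal 0 1 with hγ
  set M : ℝ → ℝ := fun σ => ∫ w : Fin d → ℝ, F (x + σ • w) ∂γ with hM
  set B : ℝ → Fin d → ℝ :=
    fun σ i => (∫ w : Fin d → ℝ, F (x + σ • w) * w i ∂γ) / σ with hB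
  have key : ∀ σ : ℝ, 0 < σ → M σ = a σ ∧ B σ = b σ := by
    intro σ hσ
    refine huniq σ hσ (M σ) (B σ) ?_
    intro a'' b''
    rw [loss_change_of_var F hFc x σ (M σ) (B σ),
      loss_change_of_var F hFc x σ a'' b'']
    have hexp := loss_expansion (fun w : Fin d → ℝ => F (x + σ • w)) (memℒp_G hLip x σ)
      (M σ) rfl (fun i => σ * B σ i)
      (fun i => by
        show σ * ((∫ w : Fin d → ℝ, F (x + σ • w) * w i ∂γ) / σ) = _
        rw [mul_comm, div_mul_cancel₀ _ (ne_of_gt hσ)])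
      a'' (fun i => σ * b'' i)
    rw [hexp]
    refine le_add_of_nonneg_right ?_
    positivity
  constructor
  · refine Tendsto.congr' ?_ (tendsto_M hLip x)
    filter_upwards [self_mem_nhdsWithin] with σ hσ
    exact (key σ hσ).1
  · rw [tendsto_pi_nhds]
    intro i
    refine Tendsto.congr' ?_ (tendsto_B hLip hdiff i)
    filter_upwards [self_mem_nhdsWithin] with σ hσ
    exact congrFun (key σ hσ).2 i
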